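/- Let C be a 2-category and F : C^op → Cat a normal pseudo-functor. Then F has a bi-representation (an object I with a pseudo-natural adjoint equivalence C(−, I) ≃ F) if and only if there is an object I of C with an object i in F(I) such that (I, i) is double bi-initial in the double category of elements el(F). -/

import Mathlib

open CategoryTheory
open scoped CategoryTheory.Bicategory

universe u

variable {C : Type u} [Bicategory.{u, u} C] [Bicategory.Strict C]

/-- A normal pseudofunctor `C^op ⟶ Cat` on a 2-category `C` (contravariant on 1-morphisms,
covariant on 2-morphisms): it preserves identities strictly and composition up to
coherent compositor isomorphisms. -/
structure NPCat (C : Type u) [Bicategory.{u, u} C] [Bicategory.Strict C] where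
  obj : C → Cat.{u, u}
  map : ∀ {X Y : C}, (X ⟶ Y) → (obj Y ⥤ obj X)
  map₂ : ∀ {X Y : C} {f g : X ⟶ Y}, (f ⟶ g) → (map f ⟶ map g)
  map₂_id : ∀ {X Y : C} (f : X ⟶ Y), map₂ (𝟙 f) = 𝟙 (map f)
  map₂_comp : ∀ {X Y : C} {f g h : X ⟶ Y} (γ : f ⟶ g) (δ : g ⟶ h),
      map₂ (γ ≫ δ) = map₂ γ ≫ map₂ δ
  map_id : ∀ X : C, map (𝟙 X) = 𝟭 (obj X)
  mapComp : ∀ {X Y Z : C} (f : X ⟶ Y) (g : Y ⟶ Z), map g ⋙ map f ≅ map (f ≫ g)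
  mapComp_natural : ∀ {X Y Z : C} {f f' : X ⟶ Y} {g g' : Y ⟶ Z} (γ : f ⟶ f') (δ : g ⟶ g'),
      (CategoryTheory.Functor.whiskerRight (map₂ δ) (map f) ≫
        CategoryTheory.Functor.whiskerLeft (map g') (map₂ γ)) ≫ (mapComp f' g').hom =
      (mapComp f g).hom ≫ map₂ (γ ▷ g ≫ f' ◁ δ)
  mapComp_assoc : ∀ {X Y Z W : C} (f : X ⟶ Y) (g : Y ⟶ Z) (h : Z ⟶ W),
      CategoryTheory.Functor.whiskerLeft (map h) (mapComp f g).hom ≫ (mapComp (f ≫ g) h).hom =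
      CategoryTheory.Functor.whiskerRight (mapComp g h).hom (map f) ≫ (mapComp f (g ≫ h)).hom ≫
        eqToHom (by rw [Category.assoc])
  mapComp_id_left : ∀ {X Y : C} (f : X ⟶ Y),
      (mapComp (𝟙 X) f).hom = eqToHom (by rw [map_id, Functor.comp_id, Category.id_comp])
  mapComp_id_right : ∀ {X Y : C} (f : X ⟶ Y),
      (mapComp f (𝟙 Y)).hom = eqToHom (by rw [map_id, Functor.id_comp, Category.comp_id])

/-- Precomposition with `c` as a functor between hom-categories of a 2-category. -/
def precompF (I : C) {X Y : C} (c : X ⟶ Y) : (Y ⟶ I) ⥤ (X ⟶ I) where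
  obj h := c ≫ h
  map η := c ◁ η
  map_id h := Bicategory.whiskerLeft_id c h
  map_comp η θ := Bicategory.whiskerLeft_comp c η θ

/-- Whiskering of `precompF` in the first variable. -/
def precompNat (I : C) {X Y : C} {c d : X ⟶ Y} (γ : c ⟶ d) :
    precompF I c ⟶ precompF I d where
  app h := γ ▷ h
  naturality _ _ η := Bicategory.whisker_exchange γ η

lemma precompF_comp (I : C) {X Y Z : C} (c : X ⟶ Y) (d : Y ⟶ Z) :
    precompF I d ⋙ precompF I c = precompF I (c ≫ d) := by
  refine CategoryTheory.Functor.ext (fun h => (Category.assoc c d h).symm) ?_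
  intro h h' η
  simp [precompF, Bicategory.comp_whiskerLeft, Bicategory.Strict.associator_eqToIso,
    eqToHom_trans, eqToHom_trans_assoc]
  erw [eqToHom_trans, eqToHom_refl, Category.comp_id]

/-- A bi-representation of a normal pseudofunctor `F : C^op ⟶ Cat`: an object `I`
together with a pseudo-natural (adjoint) equivalence `C(−, I) ≃ F`. -/
structure BiRep (F : NPCat C) (I : C) where
  app : ∀ X : C, (X ⟶ I) ⥤ F.obj X
  app_equiv : ∀ X : C, (app X).IsEquivalence
  nat : ∀ {X Y : C} (c : X ⟶ Y), app Y ⋙ F.map c ≅ precompF I c ⋙ app X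
  nat_natural : ∀ {X Y : C} {c d : X ⟶ Y} (γ : c ⟶ d),
      CategoryTheory.Functor.whiskerLeft (app Y) (F.map₂ γ) ≫ (nat d).hom =
      (nat c).hom ≫ CategoryTheory.Functor.whiskerRight (precompNat I γ) (app X)
  nat_comp : ∀ {X Y Z : C} (c : X ⟶ Y) (d : Y ⟶ Z),
      (nat (c ≫ d)).hom =
      CategoryTheory.Functor.whiskerLeft (app Z) (F.mapComp c d).inv ≫
        CategoryTheory.Functor.whiskerRight (nat d).hom (F.map c) ≫
        CategoryTheory.Functor.whiskerLeft (precompF I d) (nat c).hom ≫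
        eqToHom (congrArg (fun K => K ⋙ app X) (precompF_comp I c d))

/-!
STATEMENT 15: A normal pseudofunctor `F : C^op ⟶ Cat` has a bi-representation `(I, ρ)`
if and only if there is an object `I` of `C` together with an object `i ∈ F(I)` such that
`(I, i)` is double bi-initial in the double category of elements `el(F)`.

Double bi-initiality of `(I, i)` in `el(F)` is expressed explicitly: (i) for every object
`(X, x)` of `el(F)` there is a horizontal morphism `(I, i) → (X, x)`, i.e. a morphism
`c : X ⟶ I` with an isomorphism `x ≅ F(c)(i)`; and (ii) for every vertical morphism
`α : x ⟶ y` in `F(X)` and every pair of horizontal morphisms `(c, ψ) : (I, i) → (X, x)`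
and `(d, φ) : (I, i) → (X, y)`, there is a unique square filler, i.e. a unique 2-morphism
`γ : c ⟶ d` with `ψ.hom ≫ F(γ)_i = α ≫ φ.hom`.
-/
section Helpers

variable (F : NPCat C) (I : C) (i : F.obj I)

/-- The element functor `c ↦ F(c)(i)`. -/
def elemApp (X : C) : (X ⟶ I) ⥤ F.obj X where
  obj c := (F.map c).obj i
  map γ := (F.map₂ γ).app i
  map_id c := by rw [F.map₂_id]; rfl
  map_comp γ δ := by rw [F.map₂_comp]; rfl

def elemNat {X Y : C} (c : X ⟶ Y) :
    elemApp F I i Y ⋙ F.map c ≅ precompF I c ⋙ elemApp F I i X :=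
  NatIso.ofComponents (fun h => (F.mapComp c h).app i) (fun {h h'} η => by
    have h₁ := NatTrans.congr_app (F.mapComp_natural (𝟙 c) η) i
    simp only [NatTrans.comp_app, CategoryTheory.Functor.whiskerRight_app,
      CategoryTheory.Functor.whiskerLeft_app, F.map₂_id, F.map₂_comp,
      Bicategory.id_whiskerRight, NatTrans.id_app, Category.comp_id, Category.id_comp] at h₁
    simpa [elemApp, precompF] using h₁)

lemma elemNat_natural {X Y : C} {c d : X ⟶ Y} (γ : c ⟶ d) :
    CategoryTheory.Functor.whiskerLeft (elemApp F I i Y) (F.map₂ γ) ≫ (elemNat F I i d).hom =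
      (elemNat F I i c).hom ≫
        CategoryTheory.Functor.whiskerRight (precompNat I γ) (elemApp F I i X) := by
  ext h
  have h₁ := NatTrans.congr_app (F.mapComp_natural γ (𝟙 h)) i
  simp only [NatTrans.comp_app, CategoryTheory.Functor.whiskerRight_app,
    CategoryTheory.Functor.whiskerLeft_app, F.map₂_id, F.map₂_comp,
    Bicategory.whiskerLeft_id, NatTrans.id_app, Category.comp_id, Category.id_comp] at h₁
  erw [CategoryTheory.Functor.map_id, Category.id_comp] at h₁
  exact h₁

lemma elemNat_comp {X Y Z : C} (c : X ⟶ Y) (d : Y ⟶ Z) :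
    (elemNat F I i (c ≫ d)).hom =
      CategoryTheory.Functor.whiskerLeft (elemApp F I i Z) (F.mapComp c d).inv ≫
        CategoryTheory.Functor.whiskerRight (elemNat F I i d).hom (F.map c) ≫
        CategoryTheory.Functor.whiskerLeft (precompF I d) (elemNat F I i c).hom ≫
        eqToHom (congrArg (fun K => K ⋙ elemApp F I i X) (precompF_comp I c d)) := by
  ext h
  have h₁ := NatTrans.congr_app (F.mapComp_assoc c d h) i
  simp only [NatTrans.comp_app, CategoryTheory.Functor.whiskerRight_app,
    CategoryTheory.Functor.whiskerLeft_app, eqToHom_app] at h₁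
  simp only [NatTrans.comp_app, CategoryTheory.Functor.whiskerRight_app,
    CategoryTheory.Functor.whiskerLeft_app, eqToHom_app, elemNat, elemApp, precompF,
    NatIso.ofComponents_hom_app, Iso.app_hom, Iso.app_inv]
  rw [← Iso.app_inv, Iso.eq_inv_comp]
  erw [eqToHom_app]
  exact h₁

lemma elemApp_isEquivalence (X : C)
    (H1 : ∀ (x : F.obj X), ∃ c : X ⟶ I, Nonempty (x ≅ (F.map c).obj i))
    (H2 : ∀ (x y : F.obj X) (α : x ⟶ y) (c d : X ⟶ I)
        (ψ : x ≅ (F.map c).obj i) (φ : y ≅ (F.map d).obj i),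
        ∃! γ : c ⟶ d, ψ.hom ≫ (F.map₂ γ).app i = α ≫ φ.hom) :
    (elemApp F I i X).IsEquivalence where
  faithful := ⟨fun {c d} {γ γ'} e => by
    obtain ⟨γ₀, h₀, hu⟩ := H2 _ _ ((F.map₂ γ).app i) c d (Iso.refl _) (Iso.refl _)
    have h1 : γ = γ₀ := hu γ (by simp)
    have h2 : γ' = γ₀ := hu γ' (by simpa [elemApp] using e.symm)
    rw [h1, h2]⟩
  full := ⟨fun {c d} m => by
    obtain ⟨γ₀, h₀, hu⟩ := H2 _ _ m c d (Iso.refl _) (Iso.refl _)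
    exact ⟨γ₀, by simpa [elemApp] using h₀.trans (Category.comp_id m)⟩⟩
  essSurj := ⟨fun x => by
    obtain ⟨c, ⟨e⟩⟩ := H1 x
    exact ⟨c, ⟨e.symm⟩⟩⟩

def elemBiRep
    (H1 : ∀ (X : C) (x : F.obj X), ∃ c : X ⟶ I, Nonempty (x ≅ (F.map c).obj i))
    (H2 : ∀ (X : C) (x y : F.obj X) (α : x ⟶ y) (c d : X ⟶ I)
        (ψ : x ≅ (F.map c).obj i) (φ : y ≅ (F.map d).obj i),
        ∃! γ : c ⟶ d, ψ.hom ≫ (F.map₂ γ).app i = α ≫ φ.hom) : BiRep F I where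
  app := elemApp F I i
  app_equiv X := elemApp_isEquivalence F I i X (H1 X) (H2 X)
  nat := elemNat F I i
  nat_natural := elemNat_natural F I i
  nat_comp := elemNat_comp F I i

end Helpers

section Forward

variable (F : NPCat C) {I : C} (R : BiRep F I)

def repIso {X : C} (c : X ⟶ I) :
    (F.map c).obj ((R.app I).obj (𝟙 I)) ≅ (R.app X).obj c :=
  (R.nat c).app (𝟙 I) ≪≫ eqToIso (congrArg (R.app X).obj (Bicategory.Strict.comp_id c))

lemma repIso_natural {X : C} {c d : X ⟶ I} (γ : c ⟶ d) :
    (F.map₂ γ).app ((R.app I).obj (𝟙 I)) ≫ (repIso F R d).hom =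
      (repIso F R c).hom ≫ (R.app X).map γ := by
  have h₁ := NatTrans.congr_app (R.nat_natural γ) (𝟙 I)
  simp only [NatTrans.comp_app, CategoryTheory.Functor.whiskerLeft_app,
    CategoryTheory.Functor.whiskerRight_app] at h₁
  simp only [repIso, Iso.trans_hom, Iso.app_hom, eqToIso.hom, ← Category.assoc, h₁]
  simp [precompNat, Bicategory.whiskerRight_id, Bicategory.Strict.rightUnitor_eqToIso,
    eqToHom_map]
  erw [Functor.map_comp, Functor.map_comp, eqToHom_map, eqToHom_map]
  simp

end Forward

theorem stmt15 (F : NPCat C) :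
    (∃ I : C, Nonempty (BiRep F I)) ↔
    ∃ (I : C) (i : F.obj I),
      (∀ (X : C) (x : F.obj X), ∃ c : X ⟶ I, Nonempty (x ≅ (F.map c).obj i)) ∧
      (∀ (X : C) (x y : F.obj X) (α : x ⟶ y) (c d : X ⟶ I)
        (ψ : x ≅ (F.map c).obj i) (φ : y ≅ (F.map d).obj i),
        ∃! γ : c ⟶ d, ψ.hom ≫ (F.map₂ γ).app i = α ≫ φ.hom) := by
  constructor
  · rintro ⟨I, ⟨R⟩⟩
    refine ⟨I, (R.app I).obj (𝟙 I), ?_, ?_⟩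
    · intro X x
      haveI := R.app_equiv X
      obtain ⟨c, ⟨e⟩⟩ := Functor.EssSurj.mem_essImage (F := R.app X) x
      exact ⟨c, ⟨e.symm ≪≫ (repIso F R c).symm⟩⟩
    · intro X x y α c d ψ φ
      haveI := R.app_equiv X
      set m : (R.app X).obj c ⟶ (R.app X).obj d :=
        (repIso F R c).inv ≫ ψ.inv ≫ α ≫ φ.hom ≫ (repIso F R d).hom with hm
      refine ⟨(R.app X).preimage m, ?_, ?_⟩
      · have h := repIso_natural F R ((R.app X).preimage m)
        rw [Functor.map_preimage] at h
        show ψ.hom ≫ (F.map₂ ((R.app X).preimage m)).app ((R.app I).obj (𝟙 I)) = α ≫ φ.hom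
        rw [← cancel_mono (repIso F R d).hom, Category.assoc, h, hm]
        simp
      · intro γ' hγ'
        apply (R.app X).map_injective
        rw [Functor.map_preimage]
        have h := repIso_natural F R γ'
        rw [hm, Iso.eq_inv_comp, ← h, ← cancel_epi ψ.hom, ← Category.assoc, hγ']
        simp
  · rintro ⟨I, i, H1, H2⟩
    exact ⟨I, ⟨elemBiRep F I i H1 H2⟩⟩
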